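/- arXiv:1411.2275 — 4 statements merged into one kernel-verified Lean document; each statement's English description precedes it below -/
import Mathlib

section
/- A finite poset whose precedence (Hasse) diagram, viewed as an undirected graph, is a forest, and which is also a lattice, must be a chain (totally ordered set). -/
private lemma exists_cov_le {α : Type*} [Fintype α] [Lattice α] {a b : α} (h : a < b) :
    ∃ c, a ⋖ c ∧ c ≤ b := by
  have : IsStronglyAtomic α := IsStronglyAtomic.of_wellFounded_lt
    (Finite.to_wellFoundedLT.wf)
  exact h.exists_covby_le

private lemma exists_path_up {α : Type*} [Fintype α] [Lattice α] (a b : α) (hab : a ≤ b) :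
    ∃ p : (SimpleGraph.fromRel (fun x y : α => x ⋖ y)).Walk a b,
      p.IsPath ∧ ∀ v ∈ p.support, a ≤ v ∧ v ≤ b := by
  have hwf : WellFoundedGT α := Finite.to_wellFoundedGT
  induction a using WellFoundedGT.induction with
  | _ a ih =>
    rcases eq_or_lt_of_le hab with rfl | hlt
    · exact ⟨SimpleGraph.Walk.nil, by simp, by simp⟩
    · obtain ⟨c, hac, hcb⟩ := exists_cov_le hlt
      obtain ⟨p, hp, hmem⟩ := ih c hac.lt hcb
      have hadj : (SimpleGraph.fromRel (fun x y : α => x ⋖ y)).Adj a c := by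
        rw [SimpleGraph.fromRel_adj]
        exact ⟨hac.lt.ne, Or.inl hac⟩
      refine ⟨SimpleGraph.Walk.cons hadj p, ?_, ?_⟩
      · rw [SimpleGraph.Walk.cons_isPath_iff]
        refine ⟨hp, fun hmem' => ?_⟩
        exact absurd ((hmem a hmem').1) (not_le_of_gt hac.lt)
      · intro v hv
        rw [SimpleGraph.Walk.support_cons, List.mem_cons] at hv
        rcases hv with rfl | hv
        · exact ⟨le_rfl, hab⟩
        · exact ⟨hac.lt.le.trans (hmem v hv).1, (hmem v hv).2⟩

private lemma exists_path_through {α : Type*} [Fintype α] [Lattice α] (a b z : α)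
    (h1 : a ≤ z) (h2 : z ≤ b) :
    ∃ p : (SimpleGraph.fromRel (fun x y : α => x ⋖ y)).Walk a b,
      p.IsPath ∧ z ∈ p.support ∧ ∀ v ∈ p.support, v ≤ z ∨ z ≤ v := by
  obtain ⟨p, hp, hpm⟩ := exists_path_up a z h1
  obtain ⟨q, hq, hqm⟩ := exists_path_up z b h2
  refine ⟨p.append q, ?_, ?_, ?_⟩
  · rw [SimpleGraph.Walk.isPath_def, SimpleGraph.Walk.support_append]
    rw [List.nodup_append]
    refine ⟨hp.support_nodup, hq.support_nodup.tail, ?_⟩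
    intro v hvp w hvq hvw
    subst hvw
    have h1' : v ≤ z := (hpm v hvp).2
    have h2' : z ≤ v := (hqm v (List.mem_of_mem_tail hvq)).1
    have : v = z := le_antisymm h1' h2'
    subst this
    have : v ∉ q.support.tail := by
      have := hq.support_nodup
      rw [q.support_eq_cons] at this
      exact (List.nodup_cons.mp this).1
    exact this hvq
  · rw [SimpleGraph.Walk.mem_support_append_iff]
    exact Or.inl p.end_mem_support
  · intro v hv
    rw [SimpleGraph.Walk.mem_support_append_iff] at hv
    rcases hv with hv | hv
    · exact Or.inl (hpm v hv).2
    · exact Or.inr (hqm v hv).1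

theorem forest_lattice_is_chain
    {α : Type*} [Fintype α] [Lattice α]
    (hforest : (SimpleGraph.fromRel (fun x y : α => x ⋖ y)).IsAcyclic) :
    ∀ x y : α, x ≤ y ∨ y ≤ x := by
  by_contra h
  push_neg at h
  obtain ⟨x, y, hxy, hyx⟩ := h
  obtain ⟨p1, hp1, hx1, hc1⟩ := exists_path_through (x ⊓ y) (x ⊔ y) x inf_le_left le_sup_left
  obtain ⟨p2, hp2, hy2, hc2⟩ := exists_path_through (x ⊓ y) (x ⊔ y) y inf_le_right le_sup_right
  rw [SimpleGraph.isAcyclic_iff_path_unique] at hforest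
  have heq : (⟨p1, hp1⟩ : (SimpleGraph.fromRel (fun x y : α => x ⋖ y)).Path _ _) = ⟨p2, hp2⟩ :=
    hforest _ _
  have hval : p1 = p2 := congrArg Subtype.val heq
  have : x ∈ p2.support := hval ▸ hx1
  rcases hc2 x this with h' | h'
  · exact hxy h'
  · exact hyx h'
end

section
/- Termination/completeness criterion for the joint-generation procedure: let P be a finite poset, X a set of minimal t-infrequent elements and Y a set of maximal t-frequent elements. If every element of P lies either above some element of X or below some element of Y (i.e. X⁺ ∪ Y⁻ = P), then X is the set of ALL minimal t-infrequent elements and Y is the set of ALL maximal t-frequent elements. -/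
open Finset

theorem joint_generation_completeness
    {α : Type*} [PartialOrder α] [Fintype α]
    [DecidableRel ((· ≤ ·) : α → α → Prop)]
    (D : Finset α) (t : ℕ) (X Y : Set α)
    (hX : ∀ a ∈ X, (D.filter fun q => a ≤ q).card < t ∧
        ∀ p, p < a → t ≤ (D.filter fun q => p ≤ q).card)
    (hY : ∀ b ∈ Y, t ≤ (D.filter fun q => b ≤ q).card ∧
        ∀ p, b < p → (D.filter fun q => p ≤ q).card < t)
    (hcover : ∀ p : α, (∃ a ∈ X, a ≤ p) ∨ (∃ b ∈ Y, p ≤ b)) :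
    X = {a : α | (D.filter fun q => a ≤ q).card < t ∧
          ∀ p, p < a → t ≤ (D.filter fun q => p ≤ q).card} ∧
    Y = {b : α | t ≤ (D.filter fun q => b ≤ q).card ∧
          ∀ p, b < p → (D.filter fun q => p ≤ q).card < t} := by
  have mono : ∀ p q : α, p ≤ q →
      (D.filter fun r => q ≤ r).card ≤ (D.filter fun r => p ≤ r).card := by
    intro p q hpq
    apply Finset.card_le_card
    intro r hr
    simp only [Finset.mem_filter] at hr ⊢
    exact ⟨hr.1, hpq.trans hr.2⟩
  constructor
  · ext a
    simp only [Set.mem_setOf_eq]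
    constructor
    · exact hX a
    · rintro ⟨hinf, hmin⟩
      rcases hcover a with ⟨x, hx, hxa⟩ | ⟨b, hb, hab⟩
      · rcases eq_or_lt_of_le hxa with rfl | hlt
        · exact hx
        · exact absurd (hmin x hlt) (not_le.2 (hX x hx).1)
      · exact absurd ((hY b hb).1.trans (mono a b hab)) (not_le.2 hinf)
  · ext b
    simp only [Set.mem_setOf_eq]
    constructor
    · exact hY b
    · rintro ⟨hfr, hmax⟩
      rcases hcover b with ⟨x, hx, hxb⟩ | ⟨y, hy, hby⟩
      · exact absurd (hfr.trans (mono x b hxb)) (not_le.2 (hX x hx).1)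
      · rcases eq_or_lt_of_le hby with rfl | hlt
        · exact hy
        · exact absurd (hY y hy).1 (not_le.2 (hmax y hlt))
end

section
/- Maximal empty boxes have point-determined coordinates: let S be a finite set of points in ℝⁿ contained in the interior of a bounded box D = [l, u], and let B = [a, b] ⊆ D be a box containing no point of S in its interior and maximal with this property among boxes contained in D. Then for each coordinate i, a_i ∈ {l_i} ∪ {p_i : p ∈ S} and b_i ∈ {u_i} ∪ {p_i : p ∈ S}. -/
theorem maximal_empty_box_coordinates
    {n : ℕ} (S : Finset (Fin n → ℝ)) (l u a b : Fin n → ℝ)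
    (hlu : ∀ i, l i < u i) (hab : ∀ i, a i < b i)
    -- S lies in the interior of D = [l, u]:
    (hS : ∀ p ∈ S, ∀ i, l i < p i ∧ p i < u i)
    -- B = [a, b] is contained in D:
    (hBl : ∀ i, l i ≤ a i) (hBu : ∀ i, b i ≤ u i)
    -- the interior of B contains no point of S:
    (hempty : ¬ ∃ p ∈ S, ∀ i, a i < p i ∧ p i < b i)
    -- maximality: any strictly larger box inside D has a point of S in its interior:
    (hmax : ∀ a' b' : Fin n → ℝ, (∀ i, l i ≤ a' i) → (∀ i, b' i ≤ u i) →
        (∀ i, a' i ≤ a i) → (∀ i, b i ≤ b' i) → (a' ≠ a ∨ b' ≠ b) →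
        ∃ p ∈ S, ∀ i, a' i < p i ∧ p i < b' i) :
    ∀ i : Fin n, (a i = l i ∨ ∃ p ∈ S, p i = a i) ∧
      (b i = u i ∨ ∃ p ∈ S, p i = b i) := by
  classical
  intro i
  constructor
  · rcases le_or_gt (a i) (l i) with h | h
    · exact Or.inl (le_antisymm h (hBl i))
    · right
      set T := insert (l i) ((S.image fun p => p i).filter (· < a i)) with hT
      have hTne : T.Nonempty := ⟨l i, Finset.mem_insert_self _ _⟩
      set m := T.max' hTne with hm
      have hmlt : m < a i := by
        have hmem := T.max'_mem hTne
        rcases Finset.mem_insert.1 hmem with h1 | h1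
        · rw [← hm] at h1; rw [h1]; exact h
        · exact (Finset.mem_filter.1 h1).2
      have hlm : l i ≤ m := Finset.le_max' _ _ (Finset.mem_insert_self _ _)
      set a' := Function.update a i ((m + a i) / 2) with ha'
      have ha'i : a' i = (m + a i) / 2 := Function.update_self _ _ _
      have ha'j : ∀ j, j ≠ i → a' j = a j := fun j hj => Function.update_of_ne hj _ _
      obtain ⟨p, hp, hpj⟩ := hmax a' b
        (fun j => by
          by_cases hji : j = i
          · subst hji; rw [ha'i]; linarith
          · rw [ha'j j hji]; exact hBl j)
        hBu
        (fun j => by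
          by_cases hji : j = i
          · subst hji; rw [ha'i]; linarith
          · rw [ha'j j hji])
        (fun j => le_refl _)
        (Or.inl (by
          intro heq
          have : a' i = a i := congrFun heq i
          rw [ha'i] at this; linarith))
      have hple : p i ≤ a i := by
        by_contra hgt
        push_neg at hgt
        exact hempty ⟨p, hp, fun j => by
          by_cases hji : j = i
          · subst hji; exact ⟨hgt, (hpj j).2⟩
          · exact ⟨by rw [← ha'j j hji]; exact (hpj j).1, (hpj j).2⟩⟩
      refine ⟨p, hp, ?_⟩
      rcases lt_or_eq_of_le hple with hlt | heq
      · exfalso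
        have hmemT : p i ∈ T := Finset.mem_insert_of_mem
          (Finset.mem_filter.2 ⟨Finset.mem_image.2 ⟨p, hp, rfl⟩, hlt⟩)
        have := Finset.le_max' _ _ hmemT
        have hai := hpj i
        rw [ha'i] at hai
        have := hai.1
        linarith
      · exact heq
  · rcases le_or_gt (u i) (b i) with h | h
    · exact Or.inl (le_antisymm (hBu i) h)
    · right
      set T := insert (u i) ((S.image fun p => p i).filter (b i < ·)) with hT
      have hTne : T.Nonempty := ⟨u i, Finset.mem_insert_self _ _⟩
      set m := T.min' hTne with hm
      have hmlt : b i < m := by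
        have hmem := T.min'_mem hTne
        rcases Finset.mem_insert.1 hmem with h1 | h1
        · rw [← hm] at h1; rw [h1]; exact h
        · exact (Finset.mem_filter.1 h1).2
      have hlm : m ≤ u i := Finset.min'_le _ _ (Finset.mem_insert_self _ _)
      set b' := Function.update b i ((m + b i) / 2) with hb'
      have hb'i : b' i = (m + b i) / 2 := Function.update_self _ _ _
      have hb'j : ∀ j, j ≠ i → b' j = b j := fun j hj => Function.update_of_ne hj _ _
      obtain ⟨p, hp, hpj⟩ := hmax a b'
        hBl
        (fun j => by
          by_cases hji : j = i
          · subst hji; rw [hb'i]; linarith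
          · rw [hb'j j hji]; exact hBu j)
        (fun j => le_refl _)
        (fun j => by
          by_cases hji : j = i
          · subst hji; rw [hb'i]; linarith
          · rw [hb'j j hji])
        (Or.inr (by
          intro heq
          have : b' i = b i := congrFun heq i
          rw [hb'i] at this; linarith))
      have hple : b i ≤ p i := by
        by_contra hgt
        push_neg at hgt
        exact hempty ⟨p, hp, fun j => by
          by_cases hji : j = i
          · subst hji; exact ⟨(hpj j).1, hgt⟩
          · exact ⟨(hpj j).1, by rw [← hb'j j hji]; exact (hpj j).2⟩⟩
      refine ⟨p, hp, ?_⟩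
      rcases lt_or_eq_of_le hple with hlt | heq
      · exfalso
        have hmemT : p i ∈ T := Finset.mem_insert_of_mem
          (Finset.mem_filter.2 ⟨Finset.mem_image.2 ⟨p, hp, rfl⟩, hlt⟩)
        have := Finset.min'_le _ _ hmemT
        have hbi := hpj i
        rw [hb'i] at hbi
        have := hbi.2
        linarith
      · exact heq.symm
end

section
/- Hardness reduction correctness: for a binary database D ⊆ 2^V, set s = t/|D| and c = 1/|D| with t ≤ |D| and D nonempty. Then a pair (X, Z) with X ⊆ Z ⊆ V is an irredundant association rule (X minimal and Z maximal satisfying |S_D(Z)| ≥ s|D| and |S_D(X)| ≤ |S_D(Z)|/c) if and only if X = ∅ and Z is a maximal t-frequent set. -/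
open Finset

/-- Support of an itemset `X` in a binary database `D`. -/
def binSupp {V : Type*} [DecidableEq V] (D : Finset (Finset V)) (X : Finset V) : ℕ :=
  (D.filter fun T => X ⊆ T).card

/-- The rule predicate: `X ⊆ Z`, `Z` has support at least `s·|D|`, and the
confidence condition `c·|S_D(X)| ≤ |S_D(Z)|` holds. -/
def RulePred {V : Type*} [DecidableEq V] (D : Finset (Finset V)) (s c : ℝ)
    (X Z : Finset V) : Prop :=
  X ⊆ Z ∧ s * (D.card : ℝ) ≤ (binSupp D Z : ℝ) ∧
    c * (binSupp D X : ℝ) ≤ (binSupp D Z : ℝ)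

theorem irredundant_rules_are_maximal_frequent_sets
    {V : Type*} [Fintype V] [DecidableEq V]
    (D : Finset (Finset V)) (hD : D.Nonempty)
    (t : ℕ) (ht1 : 1 ≤ t) (htD : t ≤ D.card)
    (s c : ℝ) (hs : s = (t : ℝ) / (D.card : ℝ)) (hc : c = 1 / (D.card : ℝ))
    (X Z : Finset V) (hXZ : X ⊆ Z) :
    (RulePred D s c X Z ∧ (∀ X' ⊂ X, ¬ RulePred D s c X' Z) ∧
        (∀ Z', Z ⊂ Z' → ¬ RulePred D s c X Z')) ↔
      (X = ∅ ∧ t ≤ binSupp D Z ∧ ∀ Z', Z ⊂ Z' → binSupp D Z' < t) := by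
  have hDc : (0:ℝ) < (D.card : ℝ) := by exact_mod_cast hD.card_pos
  have hsD : s * (D.card : ℝ) = (t : ℝ) := by
    rw [hs]; field_simp
  have key : ∀ X' Z' : Finset V, X' ⊆ Z' → (RulePred D s c X' Z' ↔ t ≤ binSupp D Z') := by
    intro X' Z' h
    constructor
    · rintro ⟨-, h2, -⟩
      rw [hsD] at h2
      exact_mod_cast h2
    · intro h2
      refine ⟨h, ?_, ?_⟩
      · rw [hsD]; exact_mod_cast h2
      · rw [hc]
        have h1 : (binSupp D X' : ℝ) ≤ (D.card : ℝ) := by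
          have : binSupp D X' ≤ D.card := card_filter_le _ _
          exact_mod_cast this
        have h3 : (1:ℝ) ≤ (binSupp D Z' : ℝ) := by
          have : 1 ≤ binSupp D Z' := le_trans ht1 h2
          exact_mod_cast this
        calc 1 / (D.card:ℝ) * (binSupp D X' : ℝ)
            ≤ 1 / (D.card:ℝ) * (D.card:ℝ) := by
              apply mul_le_mul_of_nonneg_left h1 (by positivity)
          _ = 1 := by field_simp
          _ ≤ _ := h3
  constructor
  · rintro ⟨h1, h2, h3⟩
    have ht : t ≤ binSupp D Z := (key X Z hXZ).mp h1
    refine ⟨?_, ht, ?_⟩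
    · by_contra hne
      obtain ⟨x, hx⟩ := nonempty_iff_ne_empty.mpr hne
      exact h2 ∅ ((ssubset_iff_of_subset (empty_subset X)).mpr ⟨x, hx, notMem_empty x⟩)
        ((key ∅ Z (empty_subset Z)).mpr ht)
    · intro Z' hZZ'
      by_contra hlt
      push_neg at hlt
      exact h3 Z' hZZ' ((key X Z' (hXZ.trans hZZ'.subset)).mpr hlt)
  · rintro ⟨hXe, ht, hmax⟩
    refine ⟨(key X Z hXZ).mpr ht, ?_, ?_⟩
    · intro X' hX'
      subst hXe
      exact absurd hX' (by simp)
    · intro Z' hZZ' hr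
      exact absurd ((key X Z' (hXZ.trans hZZ'.subset)).mp hr) (not_le.mpr (hmax Z' hZZ'))
end
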